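/- arXiv:1801.04783 — 4 statements merged into one kernel-verified Lean document; each statement's English description precedes it below -/
import Mathlib

section
/- Let q, q' ∈ [0,1) and set b = q'(1−q)/(1−qq'). Let G be a geometric random variable on {1,2,…} with P[G = v] = (q')^{v−1}(1−q') for all v ≥ 1, and conditionally on G let Z have the Binomial(G−1, 1−q) distribution. Then Z has the law of a geometric random variable with parameter 1−b minus one; that is, P[Z = v] = (1−b)·b^{v} for every v ∈ ℕ. -/
open MeasureTheory ProbabilityTheory
open scoped ENNReal

/-- computation inside Lemma 2.1 of the paper.
Let `q, q' ∈ [0,1)` and `b = q'(1−q)/(1−qq')`.  Let `G` be geometric on `{1,2,…}`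
with `P[G = v] = q'^{v−1}(1−q')`, and conditionally on `G` let `Z` be
`Binomial(G−1, 1−q)`.  Then `Z` is distributed as a geometric random variable of
parameter `1−b`, minus one: `P[Z = v] = (1−b)·b^v` for all `v ∈ ℕ`.
(Here `G − 1` is modelled directly by `geometricPMF (1−q')`, whose value at `n`
is `q'^n (1−q') = P[G = n+1]`.) -/
theorem geometric_binomial_mixture
    (q q' : ℝ) (hq0 : 0 ≤ q) (hq1 : q < 1) (hq'0 : 0 ≤ q') (hq'1 : q' < 1)
    (hpos : 0 < 1 - q') (hle : 1 - q' ≤ 1) (hbin : ENNReal.ofReal (1 - q) ≤ 1)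
    (b : ℝ) (hb : b = q' * (1 - q) / (1 - q * q')) :
    ∀ v : ℕ,
      ((ProbabilityTheory.geometricPMF hpos hle).bind
        (fun n => (PMF.binomial (Real.toNNReal (1 - q)) (ENNReal.coe_le_one_iff.mp hbin) n).map Fin.val)) v
      = ENNReal.ofReal ((1 - b) * b ^ v) := by
  intro v
  have hq1' : 0 ≤ 1 - q := by linarith
  have hqq' : q * q' < 1 := lt_of_le_of_lt (by nlinarith) hq1
  have hqq'0 : 0 ≤ q * q' := mul_nonneg hq0 hq'0
  have hqq'ne : (1 : ℝ) - q * q' ≠ 0 := by linarith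
  -- 1 - ofReal (1-q) = ofReal q
  have h1p : (1 : ℝ≥0∞) - ENNReal.ofReal (1 - q) = ENNReal.ofReal q := by
    rw [← ENNReal.ofReal_one, ← ENNReal.ofReal_sub _ hq1']
    norm_num
  -- the real-valued summand
  set g : ℕ → ℝ := fun n => if v ≤ n then
      (q' ^ n * (1 - q')) * ((1 - q) ^ v * q ^ (n - v) * (n.choose v)) else 0 with hg
  have hg_nonneg : ∀ n, 0 ≤ g n := by
    intro n
    simp only [hg]
    split
    · positivity
    · exact le_refl 0
  -- value of the mapped binomial
  have hmap : ∀ n : ℕ, ((PMF.binomial (Real.toNNReal (1 - q)) (ENNReal.coe_le_one_iff.mp hbin) n).map Fin.val) v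
      = if v ≤ n then ENNReal.ofReal ((1 - q) ^ v * q ^ (n - v) * (n.choose v)) else 0 := by
    intro n
    rw [PMF.map_apply]
    split
    · next h =>
      refine (tsum_eq_single (⟨v, Nat.lt_succ_of_le h⟩ : Fin (n + 1)) ?_).trans ?_
      · intro b hb
        refine if_neg fun hv => hb ?_
        exact Fin.val_injective hv.symm
      rw [if_pos rfl, PMF.binomial_apply]
      rw [← ENNReal.ofReal_coe_nnreal]
      congr 1
      have hc : ((1 - Real.toNNReal (1 - q) : NNReal) : ℝ) = q := by
        rw [NNReal.coe_sub (ENNReal.coe_le_one_iff.mp hbin), Real.coe_toNNReal _ hq1']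
        simp
      simp only [NNReal.coe_mul, NNReal.coe_pow, NNReal.coe_natCast, hc, Real.coe_toNNReal _ hq1']
      congr 2
      simp [Fin.sub_def, Fin.val_last]
      rw [h1p, ← ENNReal.ofReal_pow hq1', ← ENNReal.ofReal_pow hq0,
        ← ENNReal.ofReal_natCast (n.choose v), ← ENNReal.ofReal_mul (by positivity),
        ← ENNReal.ofReal_mul (by positivity)]
    · next h =>
      refine ENNReal.tsum_eq_zero.mpr fun i => if_neg ?_
      intro hv
      exact h (hv ▸ Nat.lt_succ_iff.mp i.isLt)
  -- real sum
  have hr : |q * q'| < 1 := by rw [abs_of_nonneg hqq'0]; exact hqq'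
  have hsum0 := (hasSum_choose_mul_geometric_of_norm_lt_one v (r := q * q')
    (by rwa [Real.norm_eq_abs])).mul_left ((1 - q') * q' ^ v * (1 - q) ^ v)
  have hshift : ∀ m : ℕ, g (m + v) = (1 - q') * q' ^ v * (1 - q) ^ v *
      (((m + v).choose v : ℝ) * (q * q') ^ m) := by
    intro m
    simp only [hg, if_pos (Nat.le_add_left v m), Nat.add_sub_cancel, pow_add, mul_pow]
    ring
  have hsum1 : HasSum (fun m => g (m + v))
      ((1 - q') * q' ^ v * (1 - q) ^ v * (1 / (1 - q * q') ^ (v + 1))) := by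
    simpa only [hshift] using hsum0
  have hz : ∑ i ∈ Finset.range v, g i = 0 :=
    Finset.sum_eq_zero fun i hi => if_neg (by simpa using Finset.mem_range.mp hi)
  have hsumg : HasSum g ((1 - q') * q' ^ v * (1 - q) ^ v * (1 / (1 - q * q') ^ (v + 1))) :=
    (hasSum_nat_add_iff' v).mp (by rwa [hz, sub_zero])
  -- assemble
  rw [PMF.bind_apply]
  have hterm : ∀ n : ℕ, geometricPMF hpos hle n *
      ((PMF.binomial (Real.toNNReal (1 - q)) (ENNReal.coe_le_one_iff.mp hbin) n).map Fin.val) v = ENNReal.ofReal (g n) := by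
    intro n
    rw [hmap n]
    have : (geometricPMF hpos hle) n = ENNReal.ofReal (q' ^ n * (1 - q')) := by
      simp only [geometricPMF, geometricPMFReal, PMF.instFunLike]
      show ENNReal.ofReal ((1 - (1 - q')) ^ n * (1 - q')) = _
      rw [sub_sub_cancel]
    rw [this]
    simp only [hg]
    split
    · rw [← ENNReal.ofReal_mul (by positivity)]
    · simp
  simp only [hterm]
  rw [← ENNReal.ofReal_tsum_of_nonneg hg_nonneg hsumg.summable, hsumg.tsum_eq]
  have h1b : 1 - b = (1 - q') / (1 - q * q') := by
    rw [hb, eq_div_iff hqq'ne, sub_mul, div_mul_cancel₀ _ hqq'ne]; ring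
  have hpne : (1 - q * q') ^ v ≠ 0 := pow_ne_zero _ hqq'ne
  congr 1
  rw [h1b, hb, div_pow, mul_pow, pow_succ]
  field_simp
end

section
/- Let q, q' ∈ [0,1), p = 1−q, p' = 1−q', φ_1(w) = pw + q, φ_2(w) = p'w/(1 − q'w), and Ψ = φ_1^{−1}∘φ_2^{−1}. There is a constant c_2 ∈ (0, 1/20) depending only on q and q' such that for all sufficiently large L the following holds with ρ = 1 − 1/L²: if z ∈ ℂ satisfies |z| = 1 and |arg(z)| ≤ c_2/L, and w = Ψ(ρ·z), then |w| ≤ 1 − c_2/L². -/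
open Real Complex


lemma final_nonneg (ε c P Q α β g x : ℝ)
    (hε : 0 < ε) (hεb : ε ≤ P^2/100) (hP0 : 0 < P) (hP1 : P ≤ 1)
    (hQ0 : 0 ≤ Q) (hQ1 : Q ≤ 1) (hα0 : 0 ≤ α) (hα1 : α ≤ 1) (hβ0 : 0 ≤ β) (hβ4 : β ≤ 4)
    (hαβ : 2*α - β = 2*P) (hc : c = P/100)
    (hg0 : 0 ≤ g) (hgQ : g ≤ Q)
    (h1x0 : 0 ≤ 1 - x) (h1x : 1 - x ≤ ε + c^2*ε/2) :
    0 ≤ α*(2*ε-ε^2) - β*(1-x) - (2*c*ε - c^2*ε^2)*g := by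
  subst hc
  have hP2 : P^2 ≤ P := by nlinarith
  have hε1 : ε ≤ 1 := by linarith
  have A2 : α*ε^2 ≤ 1*ε^2 := mul_le_mul_of_nonneg_right hα1 (sq_nonneg ε)
  have A3 : ε*ε ≤ (P^2/100)*ε := mul_le_mul_of_nonneg_right hεb hε.le
  have A7 : P^2*ε ≤ P*ε := mul_le_mul_of_nonneg_right hP2 hε.le
  have hβx : β*(1-x) ≤ β*ε + 4*((P/100)^2*ε/2) := by
    have h1 : β*(1-x) ≤ β*(ε + (P/100)^2*ε/2) := mul_le_mul_of_nonneg_left h1x hβ0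
    have h2 : β*((P/100)^2*ε/2) ≤ 4*((P/100)^2*ε/2) := by
      have : (0:ℝ) ≤ (P/100)^2*ε/2 := by positivity
      exact mul_le_mul_of_nonneg_right hβ4 this
    linarith [h1, h2]
  have hPε0 : 0 < P*ε := mul_pos hP0 hε
  have hPε1 : P*ε ≤ 1 := mul_le_one₀ hP1 hε.le hε1
  have hPεsq : (P*ε)*(P*ε) ≤ P*ε := mul_le_of_le_one_left hPε0.le hPε1
  have hu0 : 0 ≤ 2*(P/100)*ε - (P/100)^2*ε^2 := by linarith [hPεsq, hPε0]
  have hu1 : 2*(P/100)*ε - (P/100)^2*ε^2 ≤ 2*(P/100)*ε := by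
    nlinarith [sq_nonneg (P/100*ε)]
  have hug : (2*(P/100)*ε - (P/100)^2*ε^2)*g ≤ (2*(P/100)*ε)*1 := by
    have hgl : g ≤ 1 := le_trans hgQ hQ1
    have := mul_le_mul hu1 hgl hg0 (by positivity)
    linarith [this]
  have hβε : (2*α - β)*ε = (2*P)*ε := by rw [hαβ]
  linarith [A2, A3, A7, hβx, hug, hβε, mul_pos hP0 hε]

lemma inner_bounds (q' ρ x : ℝ) (hq'0 : 0 ≤ q') (hq'1 : q' ≤ 1)
    (hρ0 : 0 ≤ ρ) (hρ1 : ρ ≤ 1) (hx0 : 0 ≤ x) (hxρ : x ≤ ρ) :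
    0 ≤ (1-q')^2 + 2*(1-q')*q'*x + q'^2*ρ^2 ∧
      (1-q')^2 + 2*(1-q')*q'*x + q'^2*ρ^2 ≤ 1 := by
  constructor
  · nlinarith [sq_nonneg ((1-q') + q'*x), sq_nonneg q', mul_le_mul hxρ hxρ hx0 hρ0]
  · nlinarith [mul_nonneg (mul_nonneg (by linarith : (0:ℝ) ≤ 1-q') hq'0)
      (by linarith : (0:ℝ) ≤ 1 - x), sq_nonneg q', mul_le_mul hxρ hxρ hx0 hρ0,
      mul_le_mul hρ1 hρ1 hρ0 (by norm_num : (0:ℝ) ≤ 1)]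

set_option maxHeartbeats 1000000 in
lemma core_ineq (q q' L s : ℝ) (hq0 : 0 ≤ q) (hq1 : q < 1) (hq'0 : 0 ≤ q') (hq'1 : q' < 1)
    (hL : 10 / ((1-q)*(1-q')) ≤ L) (hs1 : s ≤ 1)
    (h1s : 1 - s ≤ ((1-q)*(1-q')/100)^2 / (2*L^2)) :
    (1-q*q')^2*(1-1/L^2)^2 - 2*(1-q*q')*(q*(1-q'))*((1-1/L^2)*s) + (q*(1-q'))^2
      ≤ (1 - (1-q)*(1-q')/100/L^2)^2 *
        ((1-q)^2*((1-q')^2 + 2*(1-q')*q'*((1-1/L^2)*s) + q'^2*(1-1/L^2)^2)) := by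
  have hp : 0 < 1 - q := by linarith
  have hp' : 0 < 1 - q' := by linarith
  have hpp : 0 < (1-q)*(1-q') := mul_pos hp hp'
  have hpp1 : (1-q)*(1-q') ≤ 1 := by nlinarith
  have hpp2 : ((1-q)*(1-q'))^2 ≤ 1 := pow_le_one₀ hpp.le hpp1
  have hL10 : 10 ≤ L := le_trans ((le_div_iff₀ hpp).2 (by nlinarith)) hL
  have hLpos : 0 < L := by linarith
  have hL2 : (0:ℝ) < L^2 := by positivity
  have hεb : 1/L^2 ≤ ((1-q)*(1-q'))^2/100 := by
    have h1 : (0:ℝ) < (10/((1-q)*(1-q')))^2 := by positivity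
    have h2 : (10/((1-q)*(1-q')))^2 ≤ L^2 := pow_le_pow_left₀ (by positivity) hL 2
    have h3 : 1/L^2 ≤ 1/(10/((1-q)*(1-q')))^2 := by
      apply one_div_le_one_div_of_le h1 h2
    have h4 : 1/(10/((1-q)*(1-q')))^2 = ((1-q)*(1-q'))^2/100 := by
      rw [div_pow, one_div_div]; norm_num
    linarith
  clear hL
  have h1s' : 1 - s ≤ ((1-q)*(1-q')/100)^2 * (1/L^2) / 2 := by
    have heq : ((1-q)*(1-q')/100)^2 / (2*L^2) = ((1-q)*(1-q')/100)^2 * (1/L^2) / 2 := by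
      ring
    linarith [heq ▸ h1s]
  clear h1s
  have hε : (0:ℝ) < 1/L^2 := by positivity
  have hε100 : 1/L^2 ≤ 1/100 := by linarith [hεb, hpp2]
  have hcsmall : ((1-q)*(1-q')/100)^2 ≤ 1/10000 := by linarith [hpp2]
  have hcqε : ((1-q)*(1-q')/100)^2*(1/L^2) ≤ (1/10000)*(1/100) :=
    mul_le_mul hcsmall hε100 hε.le (by norm_num)
  have hs0 : (0:ℝ) ≤ s := by linarith
  have hρ0 : (0:ℝ) ≤ 1 - 1/L^2 := by linarith
  have hρ1 : 1 - 1/L^2 ≤ 1 := by linarith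
  -- x and its bounds
  have hx0 : 0 ≤ (1-1/L^2)*s := mul_nonneg hρ0 hs0
  have hxρ : (1-1/L^2)*s ≤ 1-1/L^2 := mul_le_of_le_one_right hρ0 hs1
  have hx1 : (1-1/L^2)*s ≤ 1 := le_trans hxρ hρ1
  have h1x : 1 - (1-1/L^2)*s ≤ 1/L^2 + ((1-q)*(1-q')/100)^2*(1/L^2)/2 := by
    have hm := mul_nonneg hε.le (by linarith : (0:ℝ) ≤ 1 - s)
    linarith [hm, h1s']
  -- g bounds
  have hQ0 : (0:ℝ) ≤ (1-q)^2 := sq_nonneg _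
  have hQ1 : (1-q)^2 ≤ 1 := pow_le_one₀ (by linarith) (by linarith)
  obtain ⟨hinner0, hinner1⟩ := inner_bounds q' (1-1/L^2) ((1-1/L^2)*s)
    hq'0 hq'1.le hρ0 hρ1 hx0 hxρ
  have hg0 : 0 ≤ (1-q)^2*((1-q')^2 + 2*(1-q')*q'*((1-1/L^2)*s) + q'^2*(1-1/L^2)^2) :=
    mul_nonneg hQ0 hinner0
  have hgQ : (1-q)^2*((1-q')^2 + 2*(1-q')*q'*((1-1/L^2)*s) + q'^2*(1-1/L^2)^2) ≤ (1-q)^2 :=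
    mul_le_of_le_one_right hQ0 hinner1
  -- α β facts
  have hqq0 : 0 ≤ q*q' := mul_nonneg hq0 hq'0
  have hqq'le : q*q' ≤ q' := mul_le_of_le_one_left hq'0 hq1.le
  have hα0 : 0 ≤ (1-q*q')^2 - (1-q)^2*q'^2 := by
    have hfac : (1-q*q')^2 - (1-q)^2*q'^2 = (1-q')*(1+q'-2*(q*q')) := by ring
    rw [hfac]; exact mul_nonneg hp'.le (by linarith)
  have hα1 : (1-q*q')^2 - (1-q)^2*q'^2 ≤ 1 := by
    have e1 : (1-q*q')^2 ≤ 1 := pow_le_one₀ (by linarith) (by linarith)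
    linarith [sq_nonneg ((1-q)*q'), e1]
  have hβ0 : 0 ≤ 2*(1-q*q')*(q*(1-q')) + 2*(1-q)^2*(1-q')*q' := by
    have h1 : 0 ≤ (1-q*q')*(q*(1-q')) := mul_nonneg (by linarith) (by positivity)
    have h2 : 0 ≤ (1-q)^2*(1-q')*q' := by positivity
    linarith
  have hβ4 : 2*(1-q*q')*(q*(1-q')) + 2*(1-q)^2*(1-q')*q' ≤ 4 := by
    have h1 : (1-q*q')*(q*(1-q')) ≤ 1 :=
      mul_le_one₀ (by linarith) (by positivity) (mul_le_one₀ hq1.le hp'.le (by linarith))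
    have h2 : (1-q)^2*(1-q')*q' ≤ 1 :=
      mul_le_one₀ (mul_le_one₀ hQ1 hp'.le (by linarith)) hq'0 hq'1.le
    linarith
  have hαβ : 2*((1-q*q')^2 - (1-q)^2*q'^2) -
      (2*(1-q*q')*(q*(1-q')) + 2*(1-q)^2*(1-q')*q') = 2*((1-q)*(1-q')) := by ring
  have key := final_nonneg (1/L^2) ((1-q)*(1-q')/100) ((1-q)*(1-q')) ((1-q)^2)
    ((1-q*q')^2 - (1-q)^2*q'^2) (2*(1-q*q')*(q*(1-q')) + 2*(1-q)^2*(1-q')*q')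
    ((1-q)^2*((1-q')^2 + 2*(1-q')*q'*((1-1/L^2)*s) + q'^2*(1-1/L^2)^2))
    ((1-1/L^2)*s)
    hε hεb hpp hpp1 hQ0 hQ1 hα0 hα1 hβ0 hβ4 hαβ rfl hg0 hgQ (by linarith) h1x
  have hident : (1 - ((1-q)*(1-q')/100)*(1/L^2))^2 *
        ((1-q)^2*((1-q')^2 + 2*(1-q')*q'*((1-1/L^2)*s) + q'^2*(1-1/L^2)^2)) -
      ((1-q*q')^2*(1-1/L^2)^2 - 2*(1-q*q')*(q*(1-q'))*((1-1/L^2)*s) + (q*(1-q'))^2)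
      = ((1-q*q')^2 - (1-q)^2*q'^2)*(2*(1/L^2)-(1/L^2)^2)
        - (2*(1-q*q')*(q*(1-q')) + 2*(1-q)^2*(1-q')*q')*(1-(1-1/L^2)*s)
        - (2*((1-q)*(1-q')/100)*(1/L^2) - ((1-q)*(1-q')/100)^2*(1/L^2)^2) *
          ((1-q)^2*((1-q')^2 + 2*(1-q')*q'*((1-1/L^2)*s) + q'^2*(1-1/L^2)^2)) := by
    ring
  have hteq : (1 - (1-q)*(1-q')/100/L^2) = (1 - ((1-q)*(1-q')/100)*(1/L^2)) := by ring
  rw [hteq]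
  linarith [key, hident]

open Real Complex


set_option maxHeartbeats 1000000 in
/-- the claim in the proof of Theorem 1.5 of the paper.
Let `q, q' ∈ [0,1)`, `p = 1−q`, `p' = 1−q'`, `φ₁(w) = pw + q`,
`φ₂(w) = p'w/(1 − q'w)`, and `Ψ = φ₁⁻¹ ∘ φ₂⁻¹`; explicitly
`Ψ(w) = (w/(p' + q'w) − q)/p`.  There is `c₂ ∈ (0, 1/20)` depending only on `q, q'`
such that for all sufficiently large `L`, with `ρ = 1 − 1/L²`: if `|z| = 1` and
`|arg z| ≤ c₂/L`, then `|Ψ(ρ·z)| ≤ 1 − c₂/L²`. -/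
theorem moebius_contraction
    (q q' : ℝ) (hq0 : 0 ≤ q) (hq1 : q < 1) (hq'0 : 0 ≤ q') (hq'1 : q' < 1) :
    ∃ c₂ : ℝ, 0 < c₂ ∧ c₂ < 1 / 20 ∧
      ∃ L₀ : ℝ, ∀ L : ℝ, L₀ ≤ L →
        ∀ z : ℂ, ‖z‖ = 1 → |Complex.arg z| ≤ c₂ / L →
          ‖(((((1 - 1 / (L : ℂ) ^ 2) * z) /
                ((1 - (q' : ℂ)) + (q' : ℂ) * ((1 - 1 / (L : ℂ) ^ 2) * z)) - (q : ℂ))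
              / (1 - (q : ℂ))))‖
            ≤ 1 - c₂ / L ^ 2 := by
  have hp : 0 < 1 - q := by linarith
  have hp' : 0 < 1 - q' := by linarith
  have hpp : 0 < (1-q)*(1-q') := mul_pos hp hp'
  have hpp1 : (1-q)*(1-q') ≤ 1 := by nlinarith
  have hpp2 : ((1-q)*(1-q'))^2 ≤ 1 := pow_le_one₀ hpp.le hpp1
  refine ⟨(1-q)*(1-q')/100, by positivity, by nlinarith, 10/((1-q)*(1-q')), ?_⟩
  intro L hL z hz harg
  have hL10 : 10 ≤ L := le_trans ((le_div_iff₀ hpp).2 (by nlinarith)) hL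
  have hLpos : 0 < L := by linarith
  have hL2 : (0:ℝ) < L^2 := by positivity
  have hL100 : 100 ≤ L^2 := by nlinarith
  have hz0 : z ≠ 0 := by
    intro h; rw [h] at hz; simp at hz
  have hre : z.re = Real.cos (Complex.arg z) := by
    rw [Complex.cos_arg hz0, hz, div_one]
  have hs1 : z.re ≤ 1 := hz ▸ Complex.re_le_norm z
  have hargsq : (Complex.arg z)^2 ≤ ((1-q)*(1-q')/100/L)^2 := by
    have h1 := abs_le.mp harg
    exact sq_le_sq' (by linarith [h1.1]) h1.2
  have h1s : 1 - z.re ≤ ((1-q)*(1-q')/100)^2 / (2*L^2) := by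
    have hcos := Real.one_sub_sq_div_two_le_cos (x := Complex.arg z)
    have heq : ((1-q)*(1-q')/100/L)^2/2 = ((1-q)*(1-q')/100)^2/(2*L^2) := by
      field_simp
    rw [hre]
    linarith [hcos, hargsq]
  have hd : ((1-q)*(1-q')/100)^2/(2*L^2) ≤ 1/200 := by
    rw [div_le_iff₀ (by positivity)]
    nlinarith [hpp2]
  have hshalf : 1/2 ≤ z.re := by linarith
  have hnormsq : z.re^2 + z.im^2 = 1 := by
    have h := Complex.sq_norm z
    rw [hz] at h
    rw [Complex.normSq_apply] at h
    nlinarith [h]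
  have hρ0 : (0:ℝ) ≤ 1 - 1/L^2 := by
    have : 1/L^2 ≤ 1/100 := by rw [div_le_div_iff₀ hL2 (by norm_num)]; linarith
    linarith
  -- rewrite the complex ρ as a real cast
  have hρcast : (1 - 1/(L:ℂ)^2) = (((1 - 1/L^2 : ℝ)):ℂ) := by
    push_cast
    ring
  rw [hρcast]
  -- denominator facts
  have hDre' : ∀ (u v : ℝ) (w : ℂ), ((1 - (v:ℂ)) + (v:ℂ) * ((u:ℂ) * w)).re
      = (1-v) + v*(u*w.re) := by
    intro u v w
    simp [Complex.add_re, Complex.mul_re, Complex.mul_im]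
  have hDim' : ∀ (u v : ℝ) (w : ℂ), ((1 - (v:ℂ)) + (v:ℂ) * ((u:ℂ) * w)).im
      = v*(u*w.im) := by
    intro u v w
    simp [Complex.add_im, Complex.mul_re, Complex.mul_im]
  have hDre := hDre' (1 - 1/L^2) q' z
  have hDim := hDim' (1 - 1/L^2) q' z
  have hDrepos : 0 < ((1 - (q':ℂ)) + (q':ℂ) * (((1 - 1/L^2 : ℝ):ℂ) * z)).re := by
    rw [hDre]
    have : 0 ≤ q'*((1 - 1/L^2)*z.re) := by positivity
    linarith
  have hDne : ((1 - (q':ℂ)) + (q':ℂ) * (((1 - 1/L^2 : ℝ):ℂ) * z)) ≠ 0 := by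
    intro h
    rw [h] at hDrepos
    simp at hDrepos
  have hpne : (1 - (q:ℂ)) ≠ 0 := by
    intro h
    have := congrArg Complex.re h
    simp at this
    linarith
  -- rewrite the expression as a single fraction
  have hEeq : ((((1 - 1/L^2 : ℝ):ℂ) * z) /
        ((1 - (q':ℂ)) + (q':ℂ) * (((1 - 1/L^2 : ℝ):ℂ) * z)) - (q:ℂ)) / (1 - (q:ℂ))
      = (((1-q*q' : ℝ):ℂ) * (((1 - 1/L^2 : ℝ):ℂ) * z) - ((q*(1-q') : ℝ):ℂ))
        / ((1 - (q:ℂ)) * ((1 - (q':ℂ)) + (q':ℂ) * (((1 - 1/L^2 : ℝ):ℂ) * z))) := by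
    rw [div_sub' hDne, div_div]
    rw [mul_comm ((1 - (q':ℂ)) + (q':ℂ) * (((1 - 1/L^2 : ℝ):ℂ) * z)) (1 - (q:ℂ))]
    congr 1
    push_cast
    ring
  rw [hEeq, norm_div, norm_mul]
  have habsD : 0 < ‖(1 - (q':ℂ)) + (q':ℂ) * (((1 - 1/L^2 : ℝ):ℂ) * z)‖ :=
    norm_pos_iff.mpr hDne
  have habsp : 0 < ‖1 - (q:ℂ)‖ := norm_pos_iff.mpr hpne
  rw [div_le_iff₀ (by positivity)]
  have ht0 : 0 ≤ 1 - (1-q)*(1-q')/100/L^2 := by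
    have h1 : (1-q)*(1-q')/100/L^2 ≤ 1/100 := by
      rw [div_le_div_iff₀ hL2 (by norm_num)]
      nlinarith
    linarith
  apply le_of_pow_le_pow_left₀ (two_ne_zero) (by positivity)
  -- squared inequality
  have hNsq : ‖((1-q*q' : ℝ):ℂ) * (((1 - 1/L^2 : ℝ):ℂ) * z) - ((q*(1-q') : ℝ):ℂ)‖^2
      = (1-q*q')^2*(1-1/L^2)^2 - 2*(1-q*q')*(q*(1-q'))*((1-1/L^2)*z.re) + (q*(1-q'))^2 := by
    have hNre : ∀ (a u b : ℝ) (w : ℂ), ((a:ℂ) * ((u:ℂ) * w) - (b:ℂ)).re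
        = a*(u*w.re) - b := by
      intro a u b w
      simp [Complex.sub_re, Complex.mul_re, Complex.mul_im]
    have hNim : ∀ (a u b : ℝ) (w : ℂ), ((a:ℂ) * ((u:ℂ) * w) - (b:ℂ)).im
        = a*(u*w.im) := by
      intro a u b w
      simp [Complex.sub_im, Complex.mul_re, Complex.mul_im]
    rw [Complex.sq_norm, Complex.normSq_apply,
      hNre (1-q*q') (1-1/L^2) (q*(1-q')) z, hNim (1-q*q') (1-1/L^2) (q*(1-q')) z]
    linear_combination ((1-q*q')^2*(1-1/L^2)^2) * hnormsq
  have hDsq : ‖(1 - (q':ℂ)) + (q':ℂ) * (((1 - 1/L^2 : ℝ):ℂ) * z)‖^2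
      = (1-q')^2 + 2*(1-q')*q'*((1-1/L^2)*z.re) + q'^2*(1-1/L^2)^2 := by
    rw [Complex.sq_norm, Complex.normSq_apply]
    rw [hDre, hDim]
    linear_combination (q'^2*(1-1/L^2)^2) * hnormsq
  have hpsq : ‖1 - (q:ℂ)‖^2 = (1-q)^2 := by
    have : (1 - (q:ℂ)) = (((1-q : ℝ)):ℂ) := by push_cast; ring
    rw [this, Complex.norm_real, Real.norm_eq_abs, _root_.sq_abs]
  have hcore := core_ineq q q' L z.re hq0 hq1 hq'0 hq'1 hL hs1 h1s
  calc ‖((1-q*q' : ℝ):ℂ) * (((1 - 1/L^2 : ℝ):ℂ) * z) - ((q*(1-q') : ℝ):ℂ)‖^2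
      = (1-q*q')^2*(1-1/L^2)^2 - 2*(1-q*q')*(q*(1-q'))*((1-1/L^2)*z.re) + (q*(1-q'))^2 := hNsq
    _ ≤ (1 - (1-q)*(1-q')/100/L^2)^2 *
        ((1-q)^2*((1-q')^2 + 2*(1-q')*q'*((1-1/L^2)*z.re) + q'^2*(1-1/L^2)^2)) := hcore
    _ = ((1 - (1-q)*(1-q')/100/L^2) *
        (‖1 - (q:ℂ)‖ * ‖(1 - (q':ℂ)) + (q':ℂ) * (((1 - 1/L^2 : ℝ):ℂ) * z)‖))^2 := by
        rw [mul_pow, mul_pow, hpsq, hDsq]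
end

section
/- Let c_2 ∈ (0, 1/20), let L > 0, let d be a nonnegative integer with d ≤ L², and let (β_0, …, β_d) be a probability vector (β_j ≥ 0, Σβ_j = 1) whose mean γ = Σ_j j·β_j satisfies Σ_{j=0}^{d} β_j·|j − γ| ≤ L. Set ρ = 1 − 1/L², P(z) = Σ_{j=0}^{d} β_j z^j, and let z_0 = e^{iθ} with |θ| ≤ c_2/L. Then for all sufficiently large L (depending only on c_2): |P(1/(ρ·z_0))| ≥ 1/2. -/
open Real Complex

lemma cos_lb_aux (x : ℝ) : 1 - |x| ≤ Real.cos x := by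
  rcases le_or_gt (|x|) 2 with h | h
  · nlinarith [Real.one_sub_sq_div_two_le_cos (x := x), _root_.sq_abs x, abs_nonneg x]
  · nlinarith [Real.neg_one_le_cos x]

lemma exp_mul_I_mul_aux (a b : ℝ) :
    Complex.exp ((a : ℂ) * I) * Complex.exp ((b : ℂ) * I)
      = Complex.exp (((a + b : ℝ) : ℂ) * I) := by
  rw [← Complex.exp_add]
  push_cast
  ring_nf

/-- the estimate `|P(1/(ρz₀))| ≥ 1/2` from the proof of
Theorem 1.5 of the paper.  Let `c₂ ∈ (0, 1/20)`, `d ≤ L²`, let `(β_0,…,β_d)` be a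
probability vector whose mean `γ` satisfies `Σ_j β_j|j − γ| ≤ L`, let
`ρ = 1 − 1/L²`, `P(z) = Σ_{j=0}^d β_j z^j` and `z₀ = e^{iθ}` with `|θ| ≤ c₂/L`.
Then for all sufficiently large `L` (depending only on `c₂`):
`|P(1/(ρ·z₀))| ≥ 1/2`. -/
theorem shift_polynomial_lower_bound
    (c₂ : ℝ) (hc₂0 : 0 < c₂) (hc₂ : c₂ < 1 / 20) :
    ∃ L₀ : ℝ, ∀ L : ℝ, L₀ ≤ L →
      ∀ d : ℕ, (d : ℝ) ≤ L ^ 2 →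
      ∀ β : ℕ → ℝ, (∀ j, 0 ≤ β j) →
        (∑ j ∈ Finset.range (d + 1), β j) = 1 →
      ∀ γ : ℝ, γ = ∑ j ∈ Finset.range (d + 1), β j * j →
        (∑ j ∈ Finset.range (d + 1), β j * |(j : ℝ) - γ|) ≤ L →
      ∀ θ : ℝ, |θ| ≤ c₂ / L →
        (1 / 2 : ℝ) ≤
          ‖(∑ j ∈ Finset.range (d + 1),
            (β j : ℂ) *
              (1 / (((1 - 1 / (L : ℂ) ^ 2)) * Complex.exp (θ * Complex.I))) ^ j)‖ := by
  refine ⟨2, fun L hL d hd β hβ0 hβsum γ hγ hβL θ hθ => ?_⟩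
  have hL0 : (0:ℝ) < L := by linarith
  have hL2 : (0:ℝ) < L ^ 2 := by positivity
  set ρ : ℝ := 1 - 1 / L ^ 2 with hρ
  have hu : 1 / L ^ 2 ≤ 1 / 4 := by
    rw [div_le_div_iff₀ hL2 (by norm_num)]; nlinarith
  have hu0 : 0 < 1 / L ^ 2 := by positivity
  have hρ0 : 0 < ρ := by rw [hρ]; linarith
  have hρ1 : ρ ≤ 1 := by rw [hρ]; linarith
  have hbase : (1 - 1 / (L : ℂ) ^ 2) = ((ρ : ℝ) : ℂ) := by
    rw [hρ]; push_cast; ring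
  rw [hbase]
  -- inverse powers
  have hinv1 : (1:ℝ) ≤ ρ⁻¹ := (one_le_inv₀ hρ0).2 hρ1
  -- bound M := ρ⁻¹ ^ d ≤ exp 2
  have hexpρ : Real.exp (-(2 / L ^ 2)) ≤ ρ := by
    have h1 : 1 + 2 / L ^ 2 ≤ Real.exp (2 / L ^ 2) := by
      linarith [Real.add_one_le_exp (2 / L ^ 2)]
    have h2 : 0 < 1 + 2 / L ^ 2 := by positivity
    have hE : (0:ℝ) < Real.exp (2 / L ^ 2) := Real.exp_pos _
    have hx : (1/L^2)*(1/L^2) ≤ (1/4)*(1/L^2) := mul_le_mul_of_nonneg_right hu hu0.le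
    have h6 : (1:ℝ) ≤ ρ * (1 + 2 / L ^ 2) := by
      rw [hρ]
      have hexp : (1 - 1/L^2) * (1 + 2/L^2)
          = 1 + 1/L^2 - 2*(1/L^2 * (1/L^2)) := by ring
      rw [hexp]; linarith [hx, hu0]
    have h5 : (1:ℝ) ≤ ρ * Real.exp (2 / L ^ 2) := by nlinarith [h6, h1, hρ0]
    rw [Real.exp_neg, ← mul_le_mul_iff_of_pos_right hE, inv_mul_cancel₀ hE.ne']
    exact h5
  have hMd : Real.exp (-2) ≤ ρ ^ d := by
    calc Real.exp (-2) ≤ Real.exp ((d : ℝ) * (-(2 / L ^ 2))) := by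
          apply Real.exp_le_exp.2
          rw [mul_neg, neg_le_neg_iff]
          have h3 : (d:ℝ) * (2 / L ^ 2) ≤ L ^ 2 * (2 / L ^ 2) :=
            mul_le_mul_of_nonneg_right hd (by positivity)
          have h4 : L ^ 2 * (2 / L ^ 2) = 2 := by field_simp
          linarith
      _ = Real.exp (-(2 / L ^ 2)) ^ d := by
          rw [← Real.exp_nat_mul]
      _ ≤ ρ ^ d := pow_le_pow_left₀ (Real.exp_pos _).le hexpρ d
  have hM : ρ⁻¹ ^ d ≤ Real.exp 2 := by
    rw [inv_pow]
    rw [show Real.exp 2 = (Real.exp (-2))⁻¹ by rw [← Real.exp_neg]; ring_nf]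
    exact inv_anti₀ (Real.exp_pos _) hMd
  set M : ℝ := ρ⁻¹ ^ d with hMdef
  have hM1 : (1:ℝ) ≤ M := one_le_pow₀ hinv1
  -- complex computation
  set S : ℂ := ∑ j ∈ Finset.range (d + 1),
      (β j : ℂ) * (1 / (((ρ : ℝ) : ℂ) * Complex.exp (θ * Complex.I))) ^ j with hS
  have habs : ‖S‖ = ‖(Complex.exp (((γ * θ : ℝ) : ℂ) * I) * S)‖ := by
    rw [norm_mul, Complex.norm_exp_ofReal_mul_I, one_mul]
  have hre : (Complex.exp (((γ * θ : ℝ) : ℂ) * I) * S).re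
      = ∑ j ∈ Finset.range (d + 1), (β j * ρ⁻¹ ^ j) * Real.cos ((γ - j) * θ) := by
    rw [hS, Finset.mul_sum, Complex.re_sum]
    refine Finset.sum_congr rfl fun j hj => ?_
    have hw : (1 / (((ρ : ℝ) : ℂ) * Complex.exp ((θ:ℂ) * I))) ^ j
        = ((ρ⁻¹ ^ j : ℝ) : ℂ) * Complex.exp (((-(j : ℝ) * θ : ℝ) : ℂ) * I) := by
      rw [one_div, mul_inv, ← Complex.exp_neg, mul_pow, ← Complex.exp_nat_mul]
      push_cast
      ring_nf
    rw [hw]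
    have heq : Complex.exp (((γ * θ : ℝ) : ℂ) * I) *
        ((β j : ℂ) * (((ρ⁻¹ ^ j : ℝ) : ℂ) * Complex.exp (((-(j : ℝ) * θ : ℝ) : ℂ) * I)))
        = ((β j * ρ⁻¹ ^ j : ℝ) : ℂ) * Complex.exp ((((γ - j) * θ : ℝ) : ℂ) * I) := by
      rw [show ((γ - j) * θ : ℝ) = γ * θ + (-(j:ℝ) * θ) by ring]
      rw [← exp_mul_I_mul_aux]
      push_cast
      ring
    rw [heq, Complex.re_ofReal_mul, Complex.exp_ofReal_mul_I_re]
  -- real inequality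
  have hterm : ∀ j ∈ Finset.range (d + 1),
      β j * (1 - M * (|(j:ℝ) - γ| * |θ|)) ≤ (β j * ρ⁻¹ ^ j) * Real.cos ((γ - j) * θ) := by
    intro j hj
    have hjd : j ≤ d := Nat.lt_succ_iff.1 (Finset.mem_range.1 hj)
    have ha1 : (1:ℝ) ≤ ρ⁻¹ ^ j := one_le_pow₀ hinv1
    have hab : ρ⁻¹ ^ j ≤ M := pow_le_pow_right₀ hinv1 hjd
    have hcos : 1 - |(γ - j) * θ| ≤ Real.cos ((γ - j) * θ) := cos_lb_aux _
    have habsx : |(γ - j) * θ| = |(j:ℝ) - γ| * |θ| := by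
      rw [abs_mul, abs_sub_comm]
    rw [habsx] at hcos
    have hx0 : 0 ≤ |(j:ℝ) - γ| * |θ| := by positivity
    have key : 1 - M * (|(j:ℝ) - γ| * |θ|) ≤ ρ⁻¹ ^ j * Real.cos ((γ - j) * θ) := by
      nlinarith [Real.neg_one_le_cos ((γ - j) * θ)]
    calc β j * (1 - M * (|(j:ℝ) - γ| * |θ|)) ≤ β j * (ρ⁻¹ ^ j * Real.cos ((γ - j) * θ)) :=
          mul_le_mul_of_nonneg_left key (hβ0 j)
      _ = (β j * ρ⁻¹ ^ j) * Real.cos ((γ - j) * θ) := by ring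
  have hsumlb : 1 - M * c₂ ≤
      ∑ j ∈ Finset.range (d + 1), (β j * ρ⁻¹ ^ j) * Real.cos ((γ - j) * θ) := by
    have h1 : ∑ j ∈ Finset.range (d + 1), β j * (1 - M * (|(j:ℝ) - γ| * |θ|))
        = 1 - M * |θ| * ∑ j ∈ Finset.range (d + 1), β j * |(j:ℝ) - γ| := by
      have h1' : ∑ j ∈ Finset.range (d + 1), β j * (1 - M * (|(j:ℝ) - γ| * |θ|))
          = (∑ j ∈ Finset.range (d + 1), β j)
            - M * |θ| * ∑ j ∈ Finset.range (d + 1), β j * |(j:ℝ) - γ| := by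
        rw [Finset.mul_sum, ← Finset.sum_sub_distrib]
        exact Finset.sum_congr rfl fun j hj => by ring
      rw [h1', hβsum]
    have hT0 : 0 ≤ ∑ j ∈ Finset.range (d + 1), β j * |(j:ℝ) - γ| :=
      Finset.sum_nonneg fun j _ => mul_nonneg (hβ0 j) (abs_nonneg _)
    have hθ0 : 0 ≤ |θ| := abs_nonneg _
    have hM0 : (0:ℝ) < M := by linarith
    have h2 : M * |θ| * ∑ j ∈ Finset.range (d + 1), β j * |(j:ℝ) - γ| ≤ M * c₂ := by
      calc M * |θ| * ∑ j ∈ Finset.range (d + 1), β j * |(j:ℝ) - γ|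
          ≤ M * (c₂ / L) * L := by
            apply mul_le_mul (mul_le_mul_of_nonneg_left hθ hM0.le) hβL hT0
            positivity
        _ = M * c₂ := by field_simp
    calc 1 - M * c₂ ≤ 1 - M * |θ| * ∑ j ∈ Finset.range (d + 1), β j * |(j:ℝ) - γ| := by
          linarith
      _ = ∑ j ∈ Finset.range (d + 1), β j * (1 - M * (|(j:ℝ) - γ| * |θ|)) := h1.symm
      _ ≤ _ := Finset.sum_le_sum hterm
  have hfin : (1/2 : ℝ) ≤ 1 - M * c₂ := by
    have he : Real.exp 2 = Real.exp 1 * Real.exp 1 := by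
      rw [← Real.exp_add]; norm_num
    nlinarith [Real.exp_one_lt_d9, Real.exp_pos 1, hM, hM1]
  calc (1/2 : ℝ) ≤ 1 - M * c₂ := hfin
    _ ≤ (Complex.exp (((γ * θ : ℝ) : ℂ) * I) * S).re := by rw [hre]; exact hsumlb
    _ ≤ ‖(Complex.exp (((γ * θ : ℝ) : ℂ) * I) * S)‖ := Complex.re_le_norm _
    _ = ‖S‖ := habs.symm
end

section
/- Assume q' = q. Fix ε > 0 and constants C_align, C_false ≥ 1, and let C_RW > 0 be a constant such that for every stopping time τ with respect to {G'_j} and all a ≥ 1, j ≥ 1, P_x[|g(τ+j) − g(τ) − j| ≥ a | τ < ∞] ≤ exp(−C_RW·a²/j). Let k_* ∈ ℕ and let τ_2 be a stopping time with respect to the filtration {G'_j} satisfying P_x[∞ > |g(τ_2) − k_*| > C_align·log^{1/3} n] ≤ exp(−C_false·log^{1/3} n). Set s = ⌊log^{4/9} n⌋ and let E_1 be the event {k_* ≤ g(τ_2 + s) ≤ k_* + ε·log^{2/3} n}. Then for all sufficiently large n (depending on ε, C_align, C_false, C_RW): P_x[{τ_2 < ∞} ∩ E_1^c] ≤ 2·exp(−C_false·log^{1/3}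 n). -/
open MeasureTheory ProbabilityTheory Real Filter Set
open scoped ENNReal NNReal

noncomputable section

namespace TraceRec

/-- The effective deletion probability `a = q(1-q')/(1-qq')` in the inductive
construction of the deletion-insertion channel. -/
def pA (q q' : ℝ) : ℝ := q * (1 - q') / (1 - q * q')

/-- The effective insertion probability `b = q'(1-q)/(1-qq')`. -/
def pB (q q' : ℝ) : ℝ := q' * (1 - q) / (1 - q * q')

/-- The pair `(s m, s' m)` of input/output pointers of the channel after `m` steps,
as a function of the channel randomness `ω`. -/
def SS (q q' : ℝ) (ω : ℕ → ℝ) : ℕ → ℕ × ℕ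
  | 0 => (0, 0)
  | m + 1 =>
    let p := SS q q' ω m
    if ω m ≤ pA q q' then (p.1 + 1, p.2)
    else if ω m ≤ pA q q' + pB q q' then (p.1, p.2 + 1)
    else (p.1 + 1, p.2 + 1)

/-- Step `m` is a copy step. -/
def IsCopy (q q' : ℝ) (ω : ℕ → ℝ) (m : ℕ) : Prop := pA q q' + pB q q' < ω m

/-- `ψ j`: the step of the construction at which the `j`-th output bit is produced
(the largest `t` with `s'(t) = j`). -/
def psi (q q' : ℝ) (ω : ℕ → ℝ) (j : ℕ) : ℕ := sSup {t | (SS q q' ω t).2 = j}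

/-- The trace `x̃` of the input string `x`, built from the channel randomness `ω`:
the `j`-th output bit. -/
def trace (q q' : ℝ) (x : ℕ → Bool) (ω : ℕ → ℝ) (j : ℕ) : Bool :=
  let m := sInf {m | (SS q q' ω (m + 1)).2 = j + 1}
  if pA q q' + pB q q' < ω m then x (SS q q' ω m).1
  else if pA q q' + pB q q' / 2 < ω m then true
  else false

/-- `f(k)`: the location in the trace of the first bit of `x(k:∞)` preserved by the
channel. -/
def fpos (q q' : ℝ) (ω : ℕ → ℝ) (k : ℕ) : ℕ :=
  (SS q q' ω (sInf {m | IsCopy q q' ω m ∧ k ≤ (SS q q' ω m).1})).2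

/-- `g(k')`: the location in `x` of the first bit of `x̃(k':∞)` that was copied from
`x`. -/
def gpos (q q' : ℝ) (ω : ℕ → ℝ) (k' : ℕ) : ℕ :=
  (SS q q' ω (sInf {m | IsCopy q q' ω m ∧ k' ≤ (SS q q' ω m).2})).1

/-- `h(j)`: the last bit of `x` examined by the time `x̃_j` is produced. -/
def hpos (q q' : ℝ) (ω : ℕ → ℝ) (j : ℕ) : ℕ :=
  (SS q q' ω (psi q q' ω j + 1)).1 - 1

/-- `U` is the product of uniform measures on `[0,1]`: it gives independent
uniform `[0,1]` coordinates.  (Characterization by finite-dimensional cylinders.) -/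
def IsUnifProd (U : Measure (ℕ → ℝ)) : Prop :=
  IsProbabilityMeasure U ∧
    ∀ (n : ℕ) (s : Fin n → Set ℝ), (∀ i, MeasurableSet (s i)) →
      U {ω | ∀ i : Fin n, ω i.val ∈ s i} = ∏ i, volume (s i ∩ Set.Icc (0:ℝ) 1)

/-- `μ` is the law of an i.i.d. sequence of Bernoulli(1/2) bits. -/
def IsBernoulliHalfProd (μ : Measure (ℕ → Bool)) : Prop :=
  IsProbabilityMeasure μ ∧
    ∀ (n : ℕ) (b : Fin n → Bool), μ {x | ∀ i : Fin n, x i.val = b i} = (1 / 2) ^ n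

/-- The sample space `Ω = {0,1}^ℕ × [0,1]^ℕ`. -/
abbrev Om : Type := (ℕ → Bool) × (ℕ → ℝ)

/-- `P_x = δ_x × U`. -/
def Px (U : Measure (ℕ → ℝ)) (x : ℕ → Bool) : Measure Om :=
  (Measure.dirac x).prod U

/-- The σ-field `G'_j` on `Ω`, generated by `x` and `{ω t : t ≤ ψ(j)}`. -/
def Gp (q q' : ℝ) (j : ℕ) : MeasurableSpace Om :=
  MeasurableSpace.comap
    (fun p => (p.1, fun t => if t ≤ psi q q' p.2 j then p.2 t else 0)) inferInstance

/-- `τ` is a (possibly infinite) stopping time with respect to the filtration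
`{G'_j}`. -/
def IsStopTime (q q' : ℝ) (τ : Om → ℕ∞) : Prop :=
  ∀ j : ℕ, MeasurableSet[Gp q q' j] {p | τ p ≤ (j : ℕ∞)}

/-- Evaluation of the finite part of a `ℕ∞`-valued time. -/
def tnat (n : ℕ∞) : ℕ := n.toNat

end TraceRec

open TraceRec

private lemma meas_inter_le_cond {α : Type*} [MeasurableSpace α] (μ : Measure α)
    [IsProbabilityMeasure μ] (B A : Set α) : μ (B ∩ A) ≤ μ[A | B] := by
  by_cases h : μ B = 0
  · have h0 : μ (B ∩ A) = 0 :=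
      le_antisymm (le_trans (measure_mono Set.inter_subset_left) h.le) zero_le
    simp [h0]
  · have h1 : μ B ≠ ∞ := measure_ne_top μ B
    have hc : μ[A | B] = (μ B)⁻¹ * μ.restrict B A := by
      rw [ProbabilityTheory.cond, Measure.smul_apply, smul_eq_mul]
    have h2 : μ (A ∩ B) ≤ μ.restrict B A := Measure.le_restrict_apply B A
    calc μ (B ∩ A) = μ B * ((μ B)⁻¹ * μ (A ∩ B)) := by
          rw [← mul_assoc, ENNReal.mul_inv_cancel h h1, one_mul, Set.inter_comm]
      _ ≤ 1 * ((μ B)⁻¹ * μ.restrict B A) := by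
          gcongr
          exact prob_le_one
      _ = μ[A | B] := by rw [one_mul, hc]

set_option maxHeartbeats 1000000 in
/-- Corollary 2.4 of the paper: alignment farther out.
Assume `q' = q`.  Fix `ε > 0`, constants `C_align, C_false ≥ 1` and `C_RW > 0`
satisfying the random-walk tail bound for all stopping times.  Let `τ₂` be a
stopping time with false-positive bound
`P_x[∞ > |g(τ₂) − k_*| > C_align log^{1/3} n] ≤ exp(−C_false log^{1/3} n)`.
With `s = ⌊log^{4/9} n⌋` and `E₁ = {k_* ≤ g(τ₂+s) ≤ k_* + ε log^{2/3} n}`, for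
all sufficiently large `n`:
`P_x[{τ₂ < ∞} ∩ E₁ᶜ] ≤ 2·exp(−C_false·log^{1/3} n)`. -/
theorem alignment_farther_out
    (q : ℝ) (hq0 : 0 ≤ q) (hq1 : q < 1)
    (U : Measure (ℕ → ℝ)) (hU : IsUnifProd U)
    (ε : ℝ) (hε : 0 < ε)
    (Calign Cfalse : ℝ) (hCa : 1 ≤ Calign) (hCf : 1 ≤ Cfalse)
    (CRW : ℝ) (hCRW : 0 < CRW)
    (hRW : ∀ τ : Om → ℕ∞, IsStopTime q q τ →
      ∀ x : ℕ → Bool, ∀ a : ℝ, 1 ≤ a → ∀ j : ℕ, 1 ≤ j →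
        (Px U x)[{p : Om |
            a ≤ |(gpos q q p.2 (tnat (τ p) + j) : ℝ)
                  - (gpos q q p.2 (tnat (τ p)) : ℝ) - (j : ℝ)|}
          | {p : Om | τ p ≠ ⊤}]
          ≤ ENNReal.ofReal (Real.exp (-CRW * a ^ 2 / j))) :
    ∃ n₀ : ℕ, ∀ n : ℕ, n₀ ≤ n →
    ∀ x : ℕ → Bool, ∀ kstar : ℕ, ∀ τ₂ : Om → ℕ∞, IsStopTime q q τ₂ →
      ((Px U x) {p : Om | τ₂ p ≠ ⊤ ∧
          Calign * Real.log n ^ ((1 : ℝ) / 3)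
            < |(gpos q q p.2 (tnat (τ₂ p)) : ℝ) - (kstar : ℝ)|}
        ≤ ENNReal.ofReal (Real.exp (-Cfalse * Real.log n ^ ((1 : ℝ) / 3)))) →
      (Px U x) ({p : Om | τ₂ p ≠ ⊤} ∩
          {p : Om | ¬ ((kstar : ℝ) ≤
              (gpos q q p.2 (tnat (τ₂ p) + ⌊Real.log n ^ ((4 : ℝ) / 9)⌋₊) : ℝ) ∧
            (gpos q q p.2 (tnat (τ₂ p) + ⌊Real.log n ^ ((4 : ℝ) / 9)⌋₊) : ℝ)
              ≤ (kstar : ℝ) + ε * Real.log n ^ ((2 : ℝ) / 3))})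
        ≤ ENNReal.ofReal (2 * Real.exp (-Cfalse * Real.log n ^ ((1 : ℝ) / 3))) := by
  haveI := hU.1
  set u₀ : ℝ := 2 + 2 * Calign + 8 * Cfalse / CRW + Real.sqrt ((3/2 + Calign) / ε)
    with hu₀def
  have hsq0 : (0:ℝ) ≤ Real.sqrt ((3/2 + Calign) / ε) := Real.sqrt_nonneg _
  have hdiv0 : (0:ℝ) ≤ 8 * Cfalse / CRW := by positivity
  have hu₀2 : 2 ≤ u₀ := by rw [hu₀def]; linarith
  refine ⟨⌈Real.exp (u₀ ^ 9)⌉₊ + 1, fun n hn x kstar τ₂ hτ hfp => ?_⟩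
  set t := Real.log (n : ℝ) with htdef
  have hn0 : (0:ℝ) < (n : ℝ) := by
    have : 1 ≤ n := le_trans (Nat.le_add_left _ _) hn
    exact_mod_cast Nat.lt_of_lt_of_le Nat.zero_lt_one this
  have hnR : Real.exp (u₀ ^ 9) ≤ (n : ℝ) := by
    calc Real.exp (u₀ ^ 9) ≤ (⌈Real.exp (u₀ ^ 9)⌉₊ : ℝ) := Nat.le_ceil _
      _ ≤ (n : ℝ) := by exact_mod_cast le_trans (Nat.le_succ _) hn
  have ht : u₀ ^ 9 ≤ t := by
    rw [htdef, Real.le_log_iff_exp_le hn0]; exact hnR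
  have ht0 : (0:ℝ) ≤ t := le_trans (by positivity) ht
  set u : ℝ := t ^ ((1:ℝ)/9) with hudef
  have hu : u₀ ≤ u := by
    have h9 : u₀ = (u₀ ^ 9) ^ ((1:ℝ)/9) := by
      rw [← Real.rpow_natCast u₀ 9, ← Real.rpow_mul (by linarith)]
      norm_num
    rw [h9, hudef]
    exact Real.rpow_le_rpow (by positivity) ht (by norm_num)
  have hu2 : 2 ≤ u := le_trans hu₀2 hu
  have hu0 : (0:ℝ) ≤ u := by linarith
  have hu1 : (1:ℝ) ≤ u := by linarith
  have hu3 : t ^ ((1:ℝ)/3) = u ^ 3 := by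
    rw [hudef, ← Real.rpow_natCast (t ^ ((1:ℝ)/9)) 3, ← Real.rpow_mul ht0]
    norm_num
  have hu4 : t ^ ((4:ℝ)/9) = u ^ 4 := by
    rw [hudef, ← Real.rpow_natCast (t ^ ((1:ℝ)/9)) 4, ← Real.rpow_mul ht0]
    norm_num
  have hu6 : t ^ ((2:ℝ)/3) = u ^ 6 := by
    rw [hudef, ← Real.rpow_natCast (t ^ ((1:ℝ)/9)) 6, ← Real.rpow_mul ht0]
    norm_num
  set sN : ℕ := ⌊t ^ ((4:ℝ)/9)⌋₊ with hsdef
  have hsle : (sN : ℝ) ≤ u ^ 4 := by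
    rw [hsdef, ← hu4]; exact Nat.floor_le (by positivity)
  have hsgt : u ^ 4 - 1 < (sN : ℝ) := by
    rw [hsdef, ← hu4]; exact Nat.sub_one_lt_floor _
  -- pieces of u₀
  have hCa2 : 2 * Calign ≤ u := by rw [hu₀def] at hu; linarith
  have hCf8 : 8 * Cfalse / CRW ≤ u := by rw [hu₀def] at hu; linarith
  have hSqu : Real.sqrt ((3/2 + Calign) / ε) ≤ u := by rw [hu₀def] at hu; linarith
  have hu4ge : (3:ℝ) ≤ u ^ 4 := by
    have h24 : (2:ℝ) ^ 4 ≤ u ^ 4 := pow_le_pow_left₀ (by norm_num) hu2 4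
    norm_num at h24
    linarith
  have hsR2 : (2:ℝ) < (sN : ℝ) := by linarith
  have hsN1 : 1 ≤ sN := by exact_mod_cast (by linarith : (1:ℝ) ≤ (sN:ℝ))
  have ha1 : (1:ℝ) ≤ (sN : ℝ) / 2 := by linarith
  -- key arithmetic facts
  have key3 : Calign * u ^ 3 ≤ (sN : ℝ) / 2 + 1 := by
    have hk := mul_le_mul_of_nonneg_right hCa2 (pow_nonneg hu0 3)
    have he : u * u ^ 3 = u ^ 4 := by ring
    rw [he] at hk
    linarith
  have key4 : (sN : ℝ) / 2 + (sN : ℝ) + Calign * u ^ 3 ≤ ε * u ^ 6 := by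
    have hr0 : (0:ℝ) ≤ (3/2 + Calign) / ε := by positivity
    have h1 : (3/2 + Calign) / ε ≤ u ^ 2 := by
      nlinarith [Real.sq_sqrt hr0, Real.sqrt_nonneg ((3/2 + Calign) / ε), hSqu]
    have h2 : 3/2 + Calign ≤ ε * u ^ 2 := by
      rw [div_le_iff₀ hε] at h1; linarith
    have h3 : (3/2 + Calign) * u ^ 4 ≤ ε * u ^ 2 * u ^ 4 :=
      mul_le_mul_of_nonneg_right h2 (by positivity)
    have h4 : ε * u ^ 2 * u ^ 4 = ε * u ^ 6 := by ring
    have h5 : u ^ 3 ≤ u ^ 4 := by nlinarith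
    have h6 : Calign * u ^ 3 ≤ Calign * u ^ 4 :=
      mul_le_mul_of_nonneg_left h5 (by linarith)
    nlinarith [h3, h4, h6, hsle]
  have key5 : Cfalse * u ^ 3 ≤ CRW * (sN : ℝ) / 4 := by
    have k1 : 8 * Cfalse ≤ CRW * u := by
      rw [div_le_iff₀ hCRW] at hCf8; linarith
    have k2 : 8 * Cfalse * u ^ 3 ≤ CRW * u ^ 4 := by
      have hk := mul_le_mul_of_nonneg_right k1 (pow_nonneg hu0 3)
      have he : CRW * u * u ^ 3 = CRW * u ^ 4 := by ring
      linarith [hk, he.le, he.ge]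
    have k3 : CRW * (u ^ 4 - 1) ≤ CRW * (sN : ℝ) := by
      exact mul_le_mul_of_nonneg_left hsgt.le hCRW.le
    have k4 : CRW * (u ^ 4 / 2) ≤ CRW * (u ^ 4 - 1) :=
      mul_le_mul_of_nonneg_left (by linarith) hCRW.le
    linarith
  -- probabilistic part
  set μ := Px U x with hμdef
  haveI : IsProbabilityMeasure μ := by
    rw [hμdef]; unfold Px; infer_instance
  set Bs : Set Om := {p : Om | τ₂ p ≠ ⊤} with hBdef
  set As : Set Om := {p : Om | τ₂ p ≠ ⊤ ∧
      Calign * t ^ ((1:ℝ)/3) < |(gpos q q p.2 (tnat (τ₂ p)) : ℝ) - (kstar : ℝ)|}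
    with hAdef
  set Ds : Set Om := {p : Om |
      (sN : ℝ) / 2 ≤ |(gpos q q p.2 (tnat (τ₂ p) + sN) : ℝ)
        - (gpos q q p.2 (tnat (τ₂ p)) : ℝ) - (sN : ℝ)|} with hDdef
  have hDs := hRW τ₂ hτ x ((sN : ℝ) / 2) ha1 sN hsN1
  have hDbound : μ (Bs ∩ Ds) ≤ ENNReal.ofReal (Real.exp (-Cfalse * t ^ ((1:ℝ)/3))) := by
    refine le_trans (meas_inter_le_cond μ Bs Ds) (le_trans hDs ?_)
    apply ENNReal.ofReal_le_ofReal
    apply Real.exp_le_exp.mpr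
    rw [hu3]
    have hsne : (sN : ℝ) ≠ 0 := by linarith
    have heq : -CRW * ((sN : ℝ) / 2) ^ 2 / (sN : ℝ) = -(CRW * (sN : ℝ) / 4) := by
      field_simp; ring
    rw [heq]
    linarith
  have hsub : (Bs ∩ {p : Om | ¬ ((kstar : ℝ) ≤
        (gpos q q p.2 (tnat (τ₂ p) + sN) : ℝ) ∧
        (gpos q q p.2 (tnat (τ₂ p) + sN) : ℝ)
          ≤ (kstar : ℝ) + ε * t ^ ((2:ℝ)/3))}) ⊆ As ∪ (Bs ∩ Ds) := by
    rintro p ⟨hpB, hpE⟩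
    by_cases hpA : Calign * t ^ ((1:ℝ)/3)
        < |(gpos q q p.2 (tnat (τ₂ p)) : ℝ) - (kstar : ℝ)|
    · exact Or.inl ⟨hpB, hpA⟩
    · push_neg at hpA
      rw [hu3] at hpA
      refine Or.inr ⟨hpB, ?_⟩
      have habs := abs_le.mp hpA
      rw [Set.mem_setOf_eq, not_and_or] at hpE
      show (sN : ℝ) / 2 ≤ |(gpos q q p.2 (tnat (τ₂ p) + sN) : ℝ)
        - (gpos q q p.2 (tnat (τ₂ p)) : ℝ) - (sN : ℝ)|
      rcases hpE with h1 | h2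
      · push_neg at h1
        have hlt : gpos q q p.2 (tnat (τ₂ p) + sN) < kstar := by exact_mod_cast h1
        have hle : (gpos q q p.2 (tnat (τ₂ p) + sN) : ℝ) + 1 ≤ (kstar : ℝ) := by
          exact_mod_cast Nat.succ_le_of_lt hlt
        rw [le_abs]
        right
        linarith [habs.1]
      · push_neg at h2
        rw [hu6] at h2
        rw [le_abs]
        left
        linarith [habs.2]
  calc μ (Bs ∩ _) ≤ μ (As ∪ (Bs ∩ Ds)) := measure_mono hsub
    _ ≤ μ As + μ (Bs ∩ Ds) := measure_union_le _ _
    _ ≤ ENNReal.ofReal (Real.exp (-Cfalse * t ^ ((1:ℝ)/3)))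
        + ENNReal.ofReal (Real.exp (-Cfalse * t ^ ((1:ℝ)/3))) := add_le_add hfp hDbound
    _ = ENNReal.ofReal (2 * Real.exp (-Cfalse * t ^ ((1:ℝ)/3))) := by
        rw [two_mul, ENNReal.ofReal_add (Real.exp_nonneg _) (Real.exp_nonneg _)]
end
end
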